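/- arXiv:1403.1883 — 3 statements merged into one kernel-verified Lean document; each statement's English description precedes it below -/
import Mathlib

section
/- Assume the non-degeneracy condition span{∇V(q) : q ∈ ℝ^d} = ℝ^d, and fix an index i ∈ {1,…,d}. Then every smooth function Φ : ℝ^d × ℝ^d → ℝ satisfying −(A₀Φ)(q,p) = (M⁻¹p)_i for all (q,p) ∈ ℝ^d × ℝ^d has a genuine spatial dependence: its gradient in the position variable, ∇_qΦ, is not identically zero. Equivalently, there is no smooth function φ : ℝ^d → ℝ of the momentum variable alone such that Φ(q,p) = φ(p) solves −A₀Φ = (M⁻¹p)_i everywhere. -/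
open MeasureTheory
open scoped BigOperators

noncomputable section

/-- Partial derivative in the `i`-th position variable. -/
def pdQ {d : ℕ} (i : Fin d) (f : (Fin d → ℝ) → (Fin d → ℝ) → ℝ) (q p : Fin d → ℝ) : ℝ :=
  fderiv ℝ (fun q' => f q' p) q (Pi.single i 1)

/-- Partial derivative in the `i`-th momentum variable. -/
def pdP {d : ℕ} (i : Fin d) (f : (Fin d → ℝ) → (Fin d → ℝ) → ℝ) (q p : Fin d → ℝ) : ℝ :=
  fderiv ℝ (fun p' => f q p') p (Pi.single i 1)

/-- Generator of the equilibrium Langevin dynamics: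
`A₀f = (M⁻¹p)·∇_q f − ∇V(q)·∇_p f + γ(−(M⁻¹p)·∇_p f + β⁻¹ Δ_p f)`. -/
def A0 {d : ℕ} (M : Matrix (Fin d) (Fin d) ℝ) (V : (Fin d → ℝ) → ℝ) (γ β : ℝ)
    (f : (Fin d → ℝ) → (Fin d → ℝ) → ℝ) (q p : Fin d → ℝ) : ℝ :=
  (∑ i, M⁻¹.mulVec p i * pdQ i f q p)
    - (∑ i, fderiv ℝ V q (Pi.single i 1) * pdP i f q p)
    + γ * (-(∑ i, M⁻¹.mulVec p i * pdP i f q p)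
      + β⁻¹ * ∑ i, pdP i (fun q' p' => pdP i f q' p') q p)


section Aux

lemma fderiv_basis_zero {d : ℕ} {f : (Fin d → ℝ) → ℝ} {x : Fin d → ℝ}
    (h : ∀ j, fderiv ℝ f x (Pi.single j 1) = 0) : fderiv ℝ f x = 0 := by
  ext v
  have hv : v = ∑ j, v j • (Pi.single j 1 : Fin d → ℝ) := by
    funext k
    rw [Finset.sum_apply]
    simp [Pi.single_apply]
  conv_lhs => rw [hv]
  rw [map_sum]
  simp [h]

end Aux

/-- under the non-degeneracy condition `span{∇V(q) : q ∈ ℝ^d} = ℝ^d`,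
any smooth solution `Φ` of `−A₀Φ = (M⁻¹p)_i` has a genuine spatial dependence:
`∇_q Φ` is not identically zero. -/
theorem genuine_spatial_dependence
    {d : ℕ} (hd : 1 ≤ d) (L γ β : ℝ) (hL : 0 < L) (hγ : 0 < γ) (hβ : 0 < β)
    (M : Matrix (Fin d) (Fin d) ℝ) (hM : M.PosDef)
    (V : (Fin d → ℝ) → ℝ) (hV : ContDiff ℝ (⊤ : ℕ∞) V)
    (hVper : ∀ (q : Fin d → ℝ) (m : Fin d → ℤ), V (fun j => q j + L * (m j : ℝ)) = V q)
    (hspan : Submodule.span ℝ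
      (Set.range (fun q : Fin d → ℝ => fun i : Fin d => fderiv ℝ V q (Pi.single i 1))) = ⊤)
    (i : Fin d)
    (Φ : (Fin d → ℝ) → (Fin d → ℝ) → ℝ)
    (hΦ : ContDiff ℝ (⊤ : ℕ∞) (Function.uncurry Φ))
    (hPoisson : ∀ q p : Fin d → ℝ, -(A0 M V γ β Φ q p) = M⁻¹.mulVec p i) :
    ¬ (∀ (q p : Fin d → ℝ) (j : Fin d), pdQ j Φ q p = 0) := by
  intro hq
  -- Φ is constant in q
  have hdiffU : Differentiable ℝ (Function.uncurry Φ) := hΦ.differentiable (by norm_num)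
  have hdiffq : ∀ p, Differentiable ℝ (fun q' => Φ q' p) := by
    intro p
    exact hdiffU.comp (differentiable_id.prodMk (differentiable_const p))
  have hconstq : ∀ p q, Φ q p = Φ 0 p := by
    intro p q
    apply is_const_of_fderiv_eq_zero (hdiffq p)
    intro x
    exact fderiv_basis_zero (fun j => hq x p j)
  set g : (Fin d → ℝ) → Fin d → ℝ := fun p j => pdP j Φ 0 p with hg
  have h2 : ∀ q p j, pdP j Φ q p = g p j := by
    intro q p j
    have hfun : (fun p' => Φ q p') = (fun p' => Φ 0 p') := funext fun p' => hconstq p' q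
    simp only [pdP, hg, hfun]
  have hsec : ∀ q p j, pdP j (fun q' p' => pdP j Φ q' p') q p
      = pdP j (fun q' p' => pdP j Φ q' p') 0 p := by
    intro q p j
    have hfun : (fun p' => pdP j Φ q p') = (fun p' => pdP j Φ 0 p') :=
      funext fun p' => (h2 q p' j).trans (h2 0 p' j).symm
    show fderiv ℝ (fun p' => pdP j Φ q p') p (Pi.single j 1)
      = fderiv ℝ (fun p' => pdP j Φ 0 p') p (Pi.single j 1)
    rw [hfun]
  -- global minimum of V
  have hIcc : IsCompact (Set.Icc (0 : Fin d → ℝ) (fun _ => L)) := isCompact_Icc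
  have hne : (Set.Icc (0 : Fin d → ℝ) (fun _ => L)).Nonempty :=
    ⟨0, le_refl _, fun j => hL.le⟩
  obtain ⟨q₀, hq₀K, hq₀min⟩ := hIcc.exists_isMinOn hne hV.continuous.continuousOn
  have hglobal : ∀ q, V q₀ ≤ V q := by
    intro q
    set m : Fin d → ℤ := fun j => ⌊q j / L⌋ with hm
    set q' : Fin d → ℝ := fun j => q j - L * (m j : ℝ) with hq'
    have hq'mem : q' ∈ Set.Icc (0 : Fin d → ℝ) (fun _ => L) := by
      constructor
      · intro j
        have := Int.sub_floor_div_mul_nonneg (q j) hL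
        simpa [hq', hm, mul_comm] using this
      · intro j
        have := Int.sub_floor_div_mul_lt (q j) hL
        have : q j - L * (⌊q j / L⌋ : ℝ) ≤ L := by
          have h' := Int.sub_floor_div_mul_lt (q j) hL
          nlinarith [h']
        simpa [hq', hm] using this
    have hVq : V q' = V q := by
      have := hVper q' m
      rw [← this]
      congr 1
      funext j
      simp [hq']
    calc V q₀ ≤ V q' := hq₀min hq'mem
    _ = V q := hVq
  have hlocal : IsLocalMin V q₀ := Filter.Eventually.of_forall (fun x => hglobal x)
  have hfder0 : fderiv ℝ V q₀ = 0 := hlocal.fderiv_eq_zero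
  have hVq0 : ∀ j, fderiv ℝ V q₀ (Pi.single j 1) = 0 := by
    intro j; rw [hfder0]; rfl
  -- expansion of A0 under hq / h2 / hsec
  have expand : ∀ q p, A0 M V γ β Φ q p =
      -(∑ j, fderiv ℝ V q (Pi.single j 1) * g p j)
      + γ * (-(∑ j, M⁻¹.mulVec p j * g p j)
        + β⁻¹ * ∑ j, pdP j (fun q' p' => pdP j Φ q' p') 0 p) := by
    intro q p
    have e0 : ∑ j, M⁻¹.mulVec p j * pdQ j Φ q p = 0 :=
      Finset.sum_eq_zero fun j _ => by rw [hq, mul_zero]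
    have e1 : ∑ j, fderiv ℝ V q (Pi.single j 1) * pdP j Φ q p
        = ∑ j, fderiv ℝ V q (Pi.single j 1) * g p j :=
      Finset.sum_congr rfl fun j _ => by rw [h2]
    have e2 : ∑ j, M⁻¹.mulVec p j * pdP j Φ q p = ∑ j, M⁻¹.mulVec p j * g p j :=
      Finset.sum_congr rfl fun j _ => by rw [h2]
    have e3 : ∑ j, pdP j (fun q' p' => pdP j Φ q' p') q p
        = ∑ j, pdP j (fun q' p' => pdP j Φ q' p') 0 p :=
      Finset.sum_congr rfl fun j _ => hsec q p j
    simp only [A0]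
    rw [e0, e1, e2, e3]
    ring
  -- ∇V(q)·g(p) = 0 for all q, p
  have hdot : ∀ q p, ∑ j, fderiv ℝ V q (Pi.single j 1) * g p j = 0 := by
    intro q p
    have h1 := (hPoisson q p).trans (hPoisson q₀ p).symm
    have hA : A0 M V γ β Φ q p = A0 M V γ β Φ q₀ p := by linarith
    rw [expand, expand] at hA
    have h0 : ∑ j, fderiv ℝ V q₀ (Pi.single j 1) * g p j = 0 := by
      apply Finset.sum_eq_zero
      intro j _
      rw [hVq0 j, zero_mul]
    rw [h0] at hA
    linarith
  -- hence g = 0 by the span condition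
  have hg0 : ∀ p j, g p j = 0 := by
    intro p j
    have hker : ∀ x : Fin d → ℝ,
        x ∈ Submodule.span ℝ (Set.range
          (fun q : Fin d → ℝ => fun k : Fin d => fderiv ℝ V q (Pi.single k 1))) →
        ∑ k, x k * g p k = 0 := by
      intro x hx
      induction hx using Submodule.span_induction with
      | mem x hx =>
        obtain ⟨q, rfl⟩ := hx
        exact hdot q p
      | zero => simp
      | add x y _ _ hx hy =>
        simp only [Pi.add_apply, add_mul, Finset.sum_add_distrib]
        rw [hx, hy, add_zero]
      | smul a x _ hx =>
        simp only [Pi.smul_apply, smul_eq_mul, mul_assoc, ← Finset.mul_sum]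
        rw [hx, mul_zero]
    have := hker (Pi.single j 1) (by rw [hspan]; exact Submodule.mem_top)
    simpa [Pi.single_apply] using this
  have hp0 : ∀ q p j, pdP j Φ q p = 0 := fun q p j => (h2 q p j).trans (hg0 p j)
  have hsec0 : ∀ q p j, pdP j (fun q' p' => pdP j Φ q' p') q p = 0 := by
    intro q p j
    have hfun : (fun p' => pdP j Φ q p') = (fun _ => (0 : ℝ)) :=
      funext fun p' => hp0 q p' j
    show fderiv ℝ (fun p' => pdP j Φ q p') p (Pi.single j 1) = 0
    rw [hfun, fderiv_fun_const]
    rfl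
  have hA0 : ∀ q p, A0 M V γ β Φ q p = 0 := by
    intro q p
    have e0 : ∑ j, M⁻¹.mulVec p j * pdQ j Φ q p = 0 :=
      Finset.sum_eq_zero fun j _ => by rw [hq, mul_zero]
    have e1 : ∑ j, fderiv ℝ V q (Pi.single j 1) * pdP j Φ q p = 0 :=
      Finset.sum_eq_zero fun j _ => by rw [hp0, mul_zero]
    have e2 : ∑ j, M⁻¹.mulVec p j * pdP j Φ q p = 0 :=
      Finset.sum_eq_zero fun j _ => by rw [hp0, mul_zero]
    have e3 : ∑ j, pdP j (fun q' p' => pdP j Φ q' p') q p = 0 :=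
      Finset.sum_eq_zero fun j _ => hsec0 q p j
    simp only [A0]
    rw [e0, e1, e2, e3]
    ring
  -- contradiction at p = M.mulVec (Pi.single i 1)
  have hcontr := hPoisson 0 (M.mulVec (Pi.single i 1))
  rw [hA0] at hcontr
  have hMinv : M⁻¹.mulVec (M.mulVec (Pi.single i 1)) = Pi.single i 1 := by
    rw [Matrix.mulVec_mulVec, Matrix.nonsing_inv_mul M (isUnit_iff_ne_zero.mpr hM.det_pos.ne'),
      Matrix.one_mulVec]
  rw [hMinv] at hcontr
  simp at hcontr
end
end

section
/- Let ψ ∈ E and n ≥ 1 an integer. Then for every real ω ≥ 1 and every φ_ω ∈ E satisfying i·ω·φ_ω − Aφ_ω = ψ, one has ‖φ_ω − Σ_{m=0}^{n−1} (i·ω)^{−(m+1)} A^m ψ‖ ≤ C₀ ‖A^n ψ‖ / ω^n. In particular, if additionally solutions φ_ω exist for all ω ≥ 1, then φ_ω − ψ/(iω) − A ψ/(iω)² − ⋯ − A^{n−1}ψ/(iω)^n has norm O(ω^{−n}) as ω → ∞. -/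
open scoped BigOperators

/-- under a uniform resolvent bound `‖φ‖ ≤ C₀‖iωφ − Aφ‖` along the imaginary
axis, any solution `φ_ω` of `iω φ_ω − A φ_ω = ψ` satisfies
`‖φ_ω − Σ_{m=0}^{n−1} (iω)^{−(m+1)} A^m ψ‖ ≤ C₀ ‖A^n ψ‖ / ω^n` for every `ω ≥ 1`. -/
theorem resolvent_expansion
    {E : Type*} [NormedAddCommGroup E] [NormedSpace ℂ E]
    (A : E →ₗ[ℂ] E) (C₀ : ℝ) (hC₀ : 0 < C₀)
    (hres : ∀ ω : ℝ, 1 ≤ |ω| → ∀ φ : E, ‖φ‖ ≤ C₀ * ‖(Complex.I * (ω : ℂ)) • φ - A φ‖)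
    (ψ : E) (n : ℕ) (hn : 1 ≤ n) :
    ∀ ω : ℝ, 1 ≤ ω → ∀ φω : E, (Complex.I * (ω : ℂ)) • φω - A φω = ψ →
      ‖φω - ∑ m ∈ Finset.range n, ((Complex.I * (ω : ℂ)) ^ (m + 1))⁻¹ • (A ^ m) ψ‖
        ≤ C₀ * ‖(A ^ n) ψ‖ / ω ^ n := by
  intro ω hω φω hφ
  set z : ℂ := Complex.I * (ω : ℂ) with hz
  have hω0 : (0:ℝ) < ω := lt_of_lt_of_le one_pos hω
  have hzne : z ≠ 0 := by
    simp [hz, Complex.I_ne_zero, Complex.ofReal_ne_zero, ne_of_gt hω0]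
  have habs : ‖z‖ = ω := by
    simp [hz, abs_of_pos hω0]
  set f : ℕ → E := fun m => ((z ^ m)⁻¹) • (A ^ m) ψ with hf
  set s : E := ∑ m ∈ Finset.range n, ((z ^ (m + 1))⁻¹) • (A ^ m) ψ with hs
  have key : z • (φω - s) - A (φω - s) = f n := by
    have hA : A (φω - s) = A φω - ∑ m ∈ Finset.range n, ((z ^ (m + 1))⁻¹) • (A ^ (m + 1)) ψ := by
      rw [map_sub, hs, map_sum]
      congr 1
      refine Finset.sum_congr rfl fun m _ => ?_
      rw [map_smul]
      congr 1
      rw [pow_succ']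
      rfl
    have hzs : z • s = ∑ m ∈ Finset.range n, f m := by
      rw [hs, Finset.smul_sum]
      refine Finset.sum_congr rfl fun m _ => ?_
      rw [smul_smul, hf]
      congr 1
      field_simp [pow_succ]
      ring
    have hsum2 : (∑ m ∈ Finset.range n, ((z ^ (m + 1))⁻¹) • (A ^ (m + 1)) ψ)
        = ∑ m ∈ Finset.range n, f (m + 1) := rfl
    have htel : (∑ m ∈ Finset.range n, f m) - (∑ m ∈ Finset.range n, f (m + 1))
        = f 0 - f n := by
      rw [← Finset.sum_sub_distrib, Finset.sum_range_sub' f]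
    have hf0 : f 0 = ψ := by simp [hf]
    have : z • (φω - s) - A (φω - s)
        = (z • φω - A φω) - ((∑ m ∈ Finset.range n, f m) - (∑ m ∈ Finset.range n, f (m + 1))) := by
      rw [smul_sub, hA, hzs, hsum2]
      abel
    rw [this, htel, hf0, hφ]
    abel
  have hbound := hres ω (by rwa [abs_of_pos hω0]) (φω - s)
  rw [key] at hbound
  have hnorm : ‖f n‖ = ‖(A ^ n) ψ‖ / ω ^ n := by
    rw [hf]
    simp only [norm_smul, norm_inv, norm_pow, habs]
    rw [div_eq_inv_mul]
  calc ‖φω - s‖ ≤ C₀ * ‖f n‖ := hbound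
    _ = C₀ * ‖(A ^ n) ψ‖ / ω ^ n := by rw [hnorm]; ring
end

section
/- For every smooth function f : ℝ × ℝ^d × ℝ^d → ℝ that is T-periodic in its first (time) variable, L·ℤ^d-periodic in the position variable q, and compactly supported in the momentum variable p, one has ∫_0^T ∫_{[0,L]^d} ∫_{ℝ^d} ((∂_t f + A₀ f) · f)(t,q,p) μ(q,p) dp dq dt = −(γ/β) ∫_0^T ∫_{[0,L]^d} ∫_{ℝ^d} |∇_p f(t,q,p)|² μ(q,p) dp dq dt. -/
open MeasureTheory
open scoped BigOperators

noncomputable section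

/-- The Gibbs density `μ(q,p) = Z⁻¹ exp(−β(V(q) + pᵀM⁻¹p/2))`. -/
def gibbs {d : ℕ} (M : Matrix (Fin d) (Fin d) ℝ) (V : (Fin d → ℝ) → ℝ) (β Z : ℝ)
    (q p : Fin d → ℝ) : ℝ :=
  Z⁻¹ * Real.exp (-β * (V q + (∑ i, p i * M⁻¹.mulVec p i) / 2))

section LDAux
open MeasureTheory Matrix

/-! ### Slice derivative helpers -/

section Slices
variable {d : ℕ} {G : ℝ × (Fin d → ℝ) × (Fin d → ℝ) → ℝ} {t : ℝ} {q p : Fin d → ℝ}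

lemma LD.hasFDerivAt_embP (t : ℝ) (q p : Fin d → ℝ) :
    HasFDerivAt (fun p' : Fin d → ℝ => ((t, q, p') : ℝ × (Fin d → ℝ) × (Fin d → ℝ)))
      ((0 : (Fin d → ℝ) →L[ℝ] ℝ).prod ((0 : (Fin d → ℝ) →L[ℝ] (Fin d → ℝ)).prod
        (ContinuousLinearMap.id ℝ (Fin d → ℝ)))) p :=
  HasFDerivAt.prodMk (hasFDerivAt_const t p) (HasFDerivAt.prodMk (hasFDerivAt_const q p) (hasFDerivAt_id p))

lemma LD.hasFDerivAt_embQ (t : ℝ) (q p : Fin d → ℝ) :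
    HasFDerivAt (fun q' : Fin d → ℝ => ((t, q', p) : ℝ × (Fin d → ℝ) × (Fin d → ℝ)))
      ((0 : (Fin d → ℝ) →L[ℝ] ℝ).prod ((ContinuousLinearMap.id ℝ (Fin d → ℝ)).prod
        (0 : (Fin d → ℝ) →L[ℝ] (Fin d → ℝ)))) q :=
  HasFDerivAt.prodMk (hasFDerivAt_const t q) (HasFDerivAt.prodMk (hasFDerivAt_id q) (hasFDerivAt_const p q))

lemma LD.hasFDerivAt_embT (t : ℝ) (q p : Fin d → ℝ) :
    HasFDerivAt (fun t' : ℝ => ((t', q, p) : ℝ × (Fin d → ℝ) × (Fin d → ℝ)))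
      ((ContinuousLinearMap.id ℝ ℝ).prod (0 : ℝ →L[ℝ] (Fin d → ℝ) × (Fin d → ℝ))) t :=
  HasFDerivAt.prodMk (hasFDerivAt_id t) (hasFDerivAt_const (q, p) t)

lemma LD.hasFDerivAt_sliceP (hG : DifferentiableAt ℝ G (t, q, p)) :
    HasFDerivAt (fun p' => G (t, q, p'))
      ((fderiv ℝ G (t, q, p)).comp ((0 : (Fin d → ℝ) →L[ℝ] ℝ).prod
        ((0 : (Fin d → ℝ) →L[ℝ] (Fin d → ℝ)).prod (ContinuousLinearMap.id ℝ (Fin d → ℝ))))) p :=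
  hG.hasFDerivAt.comp p (LD.hasFDerivAt_embP t q p)

lemma LD.fderiv_sliceP_apply (hG : DifferentiableAt ℝ G (t, q, p)) (v : Fin d → ℝ) :
    fderiv ℝ (fun p' => G (t, q, p')) p v = fderiv ℝ G (t, q, p) (0, 0, v) := by
  rw [(LD.hasFDerivAt_sliceP hG).fderiv]; rfl

lemma LD.hasFDerivAt_sliceQ (hG : DifferentiableAt ℝ G (t, q, p)) :
    HasFDerivAt (fun q' => G (t, q', p))
      ((fderiv ℝ G (t, q, p)).comp ((0 : (Fin d → ℝ) →L[ℝ] ℝ).prod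
        ((ContinuousLinearMap.id ℝ (Fin d → ℝ)).prod (0 : (Fin d → ℝ) →L[ℝ] (Fin d → ℝ))))) q :=
  hG.hasFDerivAt.comp q (LD.hasFDerivAt_embQ t q p)

lemma LD.fderiv_sliceQ_apply (hG : DifferentiableAt ℝ G (t, q, p)) (v : Fin d → ℝ) :
    fderiv ℝ (fun q' => G (t, q', p)) q v = fderiv ℝ G (t, q, p) (0, v, 0) := by
  rw [(LD.hasFDerivAt_sliceQ hG).fderiv]; rfl

lemma LD.hasDerivAt_sliceT (hG : DifferentiableAt ℝ G (t, q, p)) :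
    HasDerivAt (fun t' => G (t', q, p)) (fderiv ℝ G (t, q, p) (1, 0, 0)) t := by
  have h := (hG.hasFDerivAt.comp t (LD.hasFDerivAt_embT t q p)).hasDerivAt
  exact h

lemma LD.contDiff_fderiv_apply {X : Type*} [NormedAddCommGroup X] [NormedSpace ℝ X]
    {G : X → ℝ} (hG : ContDiff ℝ (⊤ : ℕ∞) G) (v : X) :
    ContDiff ℝ (⊤ : ℕ∞) (fun x => fderiv ℝ G x v) :=
  (ContinuousLinearMap.apply ℝ ℝ v).contDiff.comp (hG.fderiv_right (by exact_mod_cast le_top))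

lemma LD.contDiff_sliceP (hG : ContDiff ℝ (⊤ : ℕ∞) G) (t : ℝ) (q : Fin d → ℝ) :
    ContDiff ℝ (⊤ : ℕ∞) (fun p' => G (t, q, p')) :=
  hG.comp (contDiff_const.prodMk (contDiff_const.prodMk contDiff_id))

lemma LD.contDiff_sliceQ (hG : ContDiff ℝ (⊤ : ℕ∞) G) (t : ℝ) (p : Fin d → ℝ) :
    ContDiff ℝ (⊤ : ℕ∞) (fun q' => G (t, q', p)) :=
  hG.comp (contDiff_const.prodMk (contDiff_id.prodMk contDiff_const))

end Slices

/-! ### Integrability helper -/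

lemma LD.integrableOn_of_compact_of_eqzero {X : Type*} [MeasurableSpace X] [TopologicalSpace X]
    [OpensMeasurableSpace X] [T2Space X] {μ : MeasureTheory.Measure X}
    [MeasureTheory.IsFiniteMeasureOnCompacts μ] {h : X → ℝ}
    (hc : Continuous h) {S C : Set X} (hS : MeasurableSet S) (hC : IsCompact C)
    (hz : ∀ x ∈ S \ C, h x = 0) : MeasureTheory.IntegrableOn h S μ := by
  have h1 : IntegrableOn h C μ := hc.continuousOn.integrableOn_compact hC
  have h2 : IntegrableOn h (S \ C) μ :=
    (integrableOn_zero (μ := μ)).congr_fun (fun x hx => (hz x hx).symm)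
      (hS.diff hC.measurableSet)
  exact (h1.union h2).mono_set (fun x hx => by
    by_cases hxC : x ∈ C
    · exact Or.inl hxC
    · exact Or.inr ⟨hx, hxC⟩)

/-! ### Directional derivatives -/

section DirDeriv
variable {X : Type*} [NormedAddCommGroup X] [NormedSpace ℝ X]

def HasDirDeriv (φ : X → ℝ) (x w : X) (v : ℝ) : Prop :=
  ∃ D : X →L[ℝ] ℝ, HasFDerivAt φ D x ∧ D w = v

namespace HasDirDeriv

lemma const (c : ℝ) (x w : X) : HasDirDeriv (fun _ => c) x w 0 :=
  ⟨0, hasFDerivAt_const c x, rfl⟩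

variable {φ ψ : X → ℝ} {x w : X} {a b : ℝ}

lemma mul (hφ : HasDirDeriv φ x w a) (hψ : HasDirDeriv ψ x w b) :
    HasDirDeriv (fun y => φ y * ψ y) x w (a * ψ x + φ x * b) := by
  obtain ⟨D1, h1, rfl⟩ := hφ; obtain ⟨D2, h2, rfl⟩ := hψ
  exact ⟨_, h1.mul h2, by simp; ring⟩

lemma add (hφ : HasDirDeriv φ x w a) (hψ : HasDirDeriv ψ x w b) :
    HasDirDeriv (fun y => φ y + ψ y) x w (a + b) := by
  obtain ⟨D1, h1, rfl⟩ := hφ; obtain ⟨D2, h2, rfl⟩ := hψ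
  exact ⟨_, h1.add h2, rfl⟩

lemma sum {ι : Type*} (s : Finset ι) {φ : ι → X → ℝ} {v : ι → ℝ}
    (h : ∀ i ∈ s, HasDirDeriv (φ i) x w (v i)) :
    HasDirDeriv (fun y => ∑ i ∈ s, φ i y) x w (∑ i ∈ s, v i) := by
  choose D hD hDv using h
  refine ⟨∑ i ∈ s.attach, D i.1 i.2, ?_, ?_⟩
  · have h' : (fun y => ∑ i ∈ s, φ i y) = fun y => ∑ i ∈ s.attach, φ i.1 y := by
      funext y; rw [← Finset.sum_attach s (fun i => φ i y)]
    rw [h']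
    exact HasFDerivAt.fun_sum (fun i _ => hD i.1 i.2)
  · rw [ContinuousLinearMap.sum_apply, ← Finset.sum_attach s v]
    exact Finset.sum_congr rfl (fun i _ => hDv i.1 i.2)

lemma const_mul (hφ : HasDirDeriv φ x w a) (c : ℝ) :
    HasDirDeriv (fun y => c * φ y) x w (c * a) := by
  obtain ⟨D, h, rfl⟩ := hφ
  exact ⟨_, h.const_mul c, by simp⟩

lemma div_const (hφ : HasDirDeriv φ x w a) (c : ℝ) :
    HasDirDeriv (fun y => φ y / c) x w (a / c) := by
  simpa [div_eq_inv_mul, mul_comm] using hφ.const_mul c⁻¹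

lemma exp (hφ : HasDirDeriv φ x w a) :
    HasDirDeriv (fun y => Real.exp (φ y)) x w (Real.exp (φ x) * a) := by
  obtain ⟨D, h, rfl⟩ := hφ
  exact ⟨_, h.exp, by simp⟩

lemma congr_value (hφ : HasDirDeriv φ x w a) (h : a = b) : HasDirDeriv φ x w b := h ▸ hφ

lemma fderiv_apply (hφ : HasDirDeriv φ x w a) : fderiv ℝ φ x w = a := by
  obtain ⟨D, h, rfl⟩ := hφ; rw [h.fderiv]

lemma of_differentiableAt (h : DifferentiableAt ℝ φ x) (w : X) :
    HasDirDeriv φ x w (fderiv ℝ φ x w) := ⟨_, h.hasFDerivAt, rfl⟩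

end HasDirDeriv

lemma LD.hasDirDeriv_sliceP {d : ℕ} {G : ℝ × (Fin d → ℝ) × (Fin d → ℝ) → ℝ} {t : ℝ}
    {q p : Fin d → ℝ} (hG : DifferentiableAt ℝ G (t, q, p)) (v : Fin d → ℝ) :
    HasDirDeriv (fun p' => G (t, q, p')) p v (fderiv ℝ G (t, q, p) (0, 0, v)) :=
  ⟨_, LD.hasFDerivAt_sliceP hG, rfl⟩

lemma LD.hasDirDeriv_sliceQ {d : ℕ} {G : ℝ × (Fin d → ℝ) × (Fin d → ℝ) → ℝ} {t : ℝ}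
    {q p : Fin d → ℝ} (hG : DifferentiableAt ℝ G (t, q, p)) (v : Fin d → ℝ) :
    HasDirDeriv (fun q' => G (t, q', p)) q v (fderiv ℝ G (t, q, p) (0, v, 0)) :=
  ⟨_, LD.hasFDerivAt_sliceQ hG, rfl⟩

end DirDeriv

/-! ### Quadratic form and Gibbs density derivatives -/

section QuadGibbs
variable {d : ℕ}

lemma LD.hasDirDeriv_proj (j : Fin d) (p w : Fin d → ℝ) :
    HasDirDeriv (fun p' : Fin d → ℝ => p' j) p w (w j) :=
  ⟨ContinuousLinearMap.proj j,
    (ContinuousLinearMap.proj (R := ℝ) (φ := fun _ : Fin d => ℝ) j).hasFDerivAt, rfl⟩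

lemma LD.hasDirDeriv_mulVec (A : Matrix (Fin d) (Fin d) ℝ) (j : Fin d) (p w : Fin d → ℝ) :
    HasDirDeriv (fun p' : Fin d → ℝ => A.mulVec p' j) p w (A.mulVec w j) := by
  simp only [Matrix.mulVec, dotProduct]
  exact HasDirDeriv.sum Finset.univ
    (fun k _ => (LD.hasDirDeriv_proj k p w).const_mul (A j k))

lemma LD.hasDirDeriv_quadform (A : Matrix (Fin d) (Fin d) ℝ) (hA : Aᵀ = A) (p : Fin d → ℝ)
    (i : Fin d) :
    HasDirDeriv (fun p' : Fin d → ℝ => ∑ j, p' j * A.mulVec p' j) p (Pi.single i 1)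
      (2 * A.mulVec p i) := by
  have h := HasDirDeriv.sum (x := p) (w := Pi.single i 1) Finset.univ
    (fun j _ => (LD.hasDirDeriv_proj j p _).mul (LD.hasDirDeriv_mulVec A j p _))
  refine h.congr_value ?_
  have hsym : ∀ j k, A j k = A k j := fun j k => by
    conv_lhs => rw [← hA]
    exact Matrix.transpose_apply A j k
  have h1 : ∀ j : Fin d, A.mulVec (Pi.single i 1) j = A j i := by
    intro j
    simp [Matrix.mulVec, dotProduct, Pi.single_apply, Finset.sum_ite_eq']
  have h2 : ∀ j : Fin d, (Pi.single i 1 : Fin d → ℝ) j = if j = i then 1 else 0 := fun j => by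
    simp [Pi.single_apply]
  simp only [h1, h2]
  have hcg : ∀ j ∈ Finset.univ, (if j = i then (1:ℝ) else 0) * A.mulVec p j + p j * A j i
      = (if j = i then A.mulVec p j else 0) + p j * A j i := by
    intro j _; by_cases hji : j = i <;> simp [hji]
  rw [Finset.sum_congr rfl hcg, Finset.sum_add_distrib,
    Finset.sum_ite_eq' Finset.univ i, if_pos (Finset.mem_univ i)]
  have h3 : ∑ j, p j * A j i = A.mulVec p i := by
    simp [Matrix.mulVec, dotProduct]
    exact Finset.sum_congr rfl fun j _ => by rw [hsym j i]; ring
  rw [h3]; ring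

lemma LD.contDiff_quadform (A : Matrix (Fin d) (Fin d) ℝ) :
    ContDiff ℝ (⊤:ℕ∞) (fun p : Fin d → ℝ => ∑ j, p j * A.mulVec p j) := by
  apply ContDiff.sum; intro j _
  refine ContDiff.mul (contDiff_apply ℝ ℝ j) ?_
  have h : (fun p : Fin d → ℝ => A.mulVec p j) = fun p => ∑ k, A j k * p k := by
    funext p; simp [Matrix.mulVec, dotProduct]
  rw [h]
  exact ContDiff.sum fun k _ => contDiff_const.mul (contDiff_apply ℝ ℝ k)

lemma LD.continuous_mulVec (A : Matrix (Fin d) (Fin d) ℝ) (i : Fin d) :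
    Continuous (fun p : Fin d → ℝ => A.mulVec p i) := by
  simp only [Matrix.mulVec, dotProduct]
  exact continuous_finset_sum _ fun k _ => continuous_const.mul (continuous_apply k)

variable (M : Matrix (Fin d) (Fin d) ℝ) (V : (Fin d → ℝ) → ℝ) (β Z : ℝ)

lemma LD.contDiff_gibbs (hV : ContDiff ℝ (⊤:ℕ∞) V) :
    ContDiff ℝ (⊤:ℕ∞) (fun x : (Fin d → ℝ) × (Fin d → ℝ) => gibbs M V β Z x.1 x.2) := by
  unfold gibbs
  refine ContDiff.mul contDiff_const (ContDiff.exp ?_)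
  exact contDiff_const.mul ((hV.comp contDiff_fst).add
    (((LD.contDiff_quadform M⁻¹).comp contDiff_snd).div_const _))

lemma LD.hasDirDeriv_gibbsP (hsym : M⁻¹ᵀ = M⁻¹) (q p : Fin d → ℝ) (i : Fin d) :
    HasDirDeriv (fun p' => gibbs M V β Z q p') p (Pi.single i 1)
      (-β * M⁻¹.mulVec p i * gibbs M V β Z q p) := by
  unfold gibbs
  have h0 := LD.hasDirDeriv_quadform M⁻¹ hsym p i
  have h1 := ((((HasDirDeriv.const (V q) p (Pi.single i 1)).add
    (h0.div_const 2)).const_mul (-β)).exp.const_mul Z⁻¹)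
  exact h1.congr_value (by ring)

lemma LD.hasDirDeriv_gibbsQ (q p : Fin d → ℝ) (i : Fin d) (hVd : DifferentiableAt ℝ V q) :
    HasDirDeriv (fun q' => gibbs M V β Z q' p) q (Pi.single i 1)
      (-β * fderiv ℝ V q (Pi.single i 1) * gibbs M V β Z q p) := by
  unfold gibbs
  have hV1 : HasDirDeriv V q (Pi.single i 1) (fderiv ℝ V q (Pi.single i 1)) :=
    ⟨fderiv ℝ V q, hVd.hasFDerivAt, rfl⟩
  have h1 := (((hV1.add ((HasDirDeriv.const (∑ j, p j * M⁻¹.mulVec p j) q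
    (Pi.single i 1)).div_const 2)).const_mul (-β)).exp.const_mul Z⁻¹)
  exact h1.congr_value (by ring)

lemma LD.contDiff_slice2Q {G : (Fin d → ℝ) × (Fin d → ℝ) → ℝ}
    (hG : ContDiff ℝ (⊤:ℕ∞) G) (p : Fin d → ℝ) :
    ContDiff ℝ (⊤:ℕ∞) (fun q' => G (q', p)) :=
  hG.comp (contDiff_id.prodMk contDiff_const)

lemma LD.contDiff_slice2P {G : (Fin d → ℝ) × (Fin d → ℝ) → ℝ}
    (hG : ContDiff ℝ (⊤:ℕ∞) G) (q : Fin d → ℝ) :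
    ContDiff ℝ (⊤:ℕ∞) (fun p' => G (q, p')) :=
  hG.comp (contDiff_const.prodMk contDiff_id)

lemma LD.gibbs_periodic (L : ℝ)
    (hVper : ∀ (q : Fin d → ℝ) (m : Fin d → ℤ), V (fun j => q j + L * (m j : ℝ)) = V q)
    (q p : Fin d → ℝ) (m : Fin d → ℤ) :
    gibbs M V β Z (fun j => q j + L * (m j : ℝ)) p = gibbs M V β Z q p := by
  unfold gibbs; rw [hVper]

end QuadGibbs
end LDAux

section LDMain
open MeasureTheory Matrix

variable {d : ℕ} (M : Matrix (Fin d) (Fin d) ℝ) (V : (Fin d → ℝ) → ℝ) (γ β Z : ℝ)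
  (f : ℝ → (Fin d → ℝ) → (Fin d → ℝ) → ℝ)

/-- uncurried `f`. -/
def LD.unc (f : ℝ → (Fin d → ℝ) → (Fin d → ℝ) → ℝ) :
    ℝ × (Fin d → ℝ) × (Fin d → ℝ) → ℝ := fun x => f x.1 x.2.1 x.2.2

/-- first `p`-partials of `f`, uncurried. -/
def LD.F1 (f : ℝ → (Fin d → ℝ) → (Fin d → ℝ) → ℝ) (i : Fin d) :
    ℝ × (Fin d → ℝ) × (Fin d → ℝ) → ℝ :=
  fun x => fderiv ℝ (LD.unc f) x (0, 0, Pi.single i 1)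

def LD.Wq (t : ℝ) (p : Fin d → ℝ) (i : Fin d) : (Fin d → ℝ) → ℝ :=
  fun q' => M⁻¹.mulVec p i * (f t q' p * f t q' p / 2 * gibbs M V β Z q' p)

def LD.Wp (t : ℝ) (q : Fin d → ℝ) (i : Fin d) : (Fin d → ℝ) → ℝ :=
  fun p' => (-(fderiv ℝ V q (Pi.single i 1)) * (f t q p' * f t q p' / 2)
    + γ / β * (f t q p' * pdP i (f t) q p')) * gibbs M V β Z q p'

def LD.Dt (t : ℝ) (q p : Fin d → ℝ) : ℝ :=
  deriv (fun t' => f t' q p) t * f t q p * gibbs M V β Z q p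

def LD.DQ (t : ℝ) (q p : Fin d → ℝ) : ℝ :=
  ∑ i, fderiv ℝ (LD.Wq M V β Z f t p i) q (Pi.single i 1)

def LD.DP (t : ℝ) (q p : Fin d → ℝ) : ℝ :=
  ∑ i, fderiv ℝ (LD.Wp M V γ β Z f t q i) p (Pi.single i 1)

section Relations
variable {f}

lemma LD.contDiff_F1 (hf : ContDiff ℝ (⊤ : ℕ∞) (LD.unc f)) (i : Fin d) :
    ContDiff ℝ (⊤ : ℕ∞) (LD.F1 f i) :=
  LD.contDiff_fderiv_apply hf _

lemma LD.pdP_eq (hf : ContDiff ℝ (⊤ : ℕ∞) (LD.unc f)) (i : Fin d) (t : ℝ) (q p : Fin d → ℝ) :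
    pdP i (f t) q p = LD.F1 f i (t, q, p) :=
  LD.fderiv_sliceP_apply ((hf.differentiable (by simp)) (t, q, p)) _

lemma LD.pdQ_eq (hf : ContDiff ℝ (⊤ : ℕ∞) (LD.unc f)) (i : Fin d) (t : ℝ) (q p : Fin d → ℝ) :
    pdQ i (f t) q p = fderiv ℝ (LD.unc f) (t, q, p) (0, Pi.single i 1, 0) :=
  LD.fderiv_sliceQ_apply ((hf.differentiable (by simp)) (t, q, p)) _

lemma LD.derivT_eq (hf : ContDiff ℝ (⊤ : ℕ∞) (LD.unc f)) (t : ℝ) (q p : Fin d → ℝ) :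
    deriv (fun t' => f t' q p) t = fderiv ℝ (LD.unc f) (t, q, p) (1, 0, 0) :=
  (LD.hasDerivAt_sliceT ((hf.differentiable (by simp)) (t, q, p))).deriv

lemma LD.pdP2_eq (hf : ContDiff ℝ (⊤ : ℕ∞) (LD.unc f)) (i : Fin d) (t : ℝ) (q p : Fin d → ℝ) :
    pdP i (fun q' p' => pdP i (f t) q' p') q p
      = fderiv ℝ (LD.F1 f i) (t, q, p) (0, 0, Pi.single i 1) := by
  have h1 : (fun p' => pdP i (f t) q p') = fun p' => LD.F1 f i (t, q, p') :=
    funext fun p' => LD.pdP_eq hf i t q p'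
  show fderiv ℝ (fun p' => pdP i (f t) q p') p (Pi.single i 1) = _
  rw [h1]
  exact LD.fderiv_sliceP_apply (((LD.contDiff_F1 hf i).differentiable (by simp)) (t, q, p)) _

end Relations

section Smooth
variable {f V}

lemma LD.contDiff_Wq (hf : ContDiff ℝ (⊤ : ℕ∞) (LD.unc f)) (hV : ContDiff ℝ (⊤ : ℕ∞) V) (t : ℝ) (p : Fin d → ℝ) (i : Fin d) :
    ContDiff ℝ (⊤ : ℕ∞) (LD.Wq M V β Z f t p i) := by
  have hsf : ContDiff ℝ (⊤ : ℕ∞) (fun q' => f t q' p) := LD.contDiff_sliceQ hf t p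
  have hsg : ContDiff ℝ (⊤ : ℕ∞) (fun q' => gibbs M V β Z q' p) :=
    LD.contDiff_slice2Q (LD.contDiff_gibbs M V β Z hV) p
  exact contDiff_const.mul (((hsf.mul hsf).div_const 2).mul hsg)

lemma LD.contDiff_Wp (hf : ContDiff ℝ (⊤ : ℕ∞) (LD.unc f)) (hV : ContDiff ℝ (⊤ : ℕ∞) V) (t : ℝ) (q : Fin d → ℝ) (i : Fin d) :
    ContDiff ℝ (⊤ : ℕ∞) (LD.Wp M V γ β Z f t q i) := by
  have heq : LD.Wp M V γ β Z f t q i = fun p' =>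
      (-(fderiv ℝ V q (Pi.single i 1)) * (f t q p' * f t q p' / 2)
        + γ / β * (f t q p' * LD.F1 f i (t, q, p'))) * gibbs M V β Z q p' := by
    funext p'; unfold LD.Wp; rw [LD.pdP_eq hf]
  rw [heq]
  have hsf : ContDiff ℝ (⊤ : ℕ∞) (fun p' => f t q p') := LD.contDiff_sliceP hf t q
  have hsF1 : ContDiff ℝ (⊤ : ℕ∞) (fun p' => LD.F1 f i (t, q, p')) :=
    LD.contDiff_sliceP (LD.contDiff_F1 hf i) t q
  have hsg : ContDiff ℝ (⊤ : ℕ∞) (fun p' => gibbs M V β Z q p') :=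
    LD.contDiff_slice2P (LD.contDiff_gibbs M V β Z hV) q
  exact ((contDiff_const.mul ((hsf.mul hsf).div_const 2)).add
    (contDiff_const.mul (hsf.mul hsF1))).mul hsg

end Smooth

/-- The key pointwise divergence identity. -/
lemma LD.pointwise {f : ℝ → (Fin d → ℝ) → (Fin d → ℝ) → ℝ} {V : (Fin d → ℝ) → ℝ}
    (hf : ContDiff ℝ (⊤ : ℕ∞) (LD.unc f)) (hV : ContDiff ℝ (⊤ : ℕ∞) V)
    (hsym : M⁻¹ᵀ = M⁻¹) (hβ : β ≠ 0) (t : ℝ) (q p : Fin d → ℝ) :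
    (deriv (fun t' => f t' q p) t + A0 M V γ β (f t) q p) * f t q p * gibbs M V β Z q p
      = LD.Dt M V β Z f t q p + LD.DQ M V β Z f t q p + LD.DP M V γ β Z f t q p
        - γ / β * ((∑ i, pdP i (f t) q p ^ 2) * gibbs M V β Z q p) := by
  have hdF : Differentiable ℝ (LD.unc f) := hf.differentiable (by simp)
  have hVd : Differentiable ℝ V := hV.differentiable (by simp)
  have hφP : ∀ i : Fin d, HasDirDeriv (fun p' => f t q p') p (Pi.single i 1)
      (pdP i (f t) q p) := fun i =>
    HasDirDeriv.of_differentiableAt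
      ((LD.hasFDerivAt_sliceP (hdF (t, q, p))).differentiableAt) _
  have hφQ : ∀ i : Fin d, HasDirDeriv (fun q' => f t q' p) q (Pi.single i 1)
      (pdQ i (f t) q p) := fun i =>
    HasDirDeriv.of_differentiableAt
      ((LD.hasFDerivAt_sliceQ (hdF (t, q, p))).differentiableAt) _
  have hψ : ∀ i : Fin d, HasDirDeriv (fun p' => pdP i (f t) q p') p (Pi.single i 1)
      (pdP i (fun q' p' => pdP i (f t) q' p') q p) := by
    intro i
    have h1 : (fun p' => pdP i (f t) q p') = fun p' => LD.F1 f i (t, q, p') :=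
      funext fun p' => LD.pdP_eq hf i t q p'
    have hd : DifferentiableAt ℝ (fun p' => pdP i (f t) q p') p := by
      rw [h1]
      exact (LD.hasFDerivAt_sliceP
        (((LD.contDiff_F1 hf i).differentiable (by simp)) (t, q, p))).differentiableAt
    exact HasDirDeriv.of_differentiableAt hd _
  have hgQ : ∀ i : Fin d, HasDirDeriv (fun q' => gibbs M V β Z q' p) q (Pi.single i 1)
      (-β * fderiv ℝ V q (Pi.single i 1) * gibbs M V β Z q p) :=
    fun i => LD.hasDirDeriv_gibbsQ M V β Z q p i (hVd q)
  have hgP : ∀ i : Fin d, HasDirDeriv (fun p' => gibbs M V β Z q p') p (Pi.single i 1)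
      (-β * M⁻¹.mulVec p i * gibbs M V β Z q p) :=
    fun i => LD.hasDirDeriv_gibbsP M V β Z hsym q p i
  have hQval : ∀ i : Fin d, fderiv ℝ (LD.Wq M V β Z f t p i) q (Pi.single i 1)
      = M⁻¹.mulVec p i * ((pdQ i (f t) q p * f t q p + f t q p * pdQ i (f t) q p) / 2
          * gibbs M V β Z q p
        + f t q p * f t q p / 2
          * (-β * fderiv ℝ V q (Pi.single i 1) * gibbs M V β Z q p)) := by
    intro i
    exact (((((hφQ i).mul (hφQ i)).div_const 2).mul (hgQ i)).const_mul
      (M⁻¹.mulVec p i)).fderiv_apply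
  have hPval : ∀ i : Fin d, fderiv ℝ (LD.Wp M V γ β Z f t q i) p (Pi.single i 1)
      = ((-(fderiv ℝ V q (Pi.single i 1))
            * ((pdP i (f t) q p * f t q p + f t q p * pdP i (f t) q p) / 2)
          + γ / β * (pdP i (f t) q p * pdP i (f t) q p
              + f t q p * pdP i (fun q' p' => pdP i (f t) q' p') q p)) * gibbs M V β Z q p
        + (-(fderiv ℝ V q (Pi.single i 1)) * (f t q p * f t q p / 2)
            + γ / β * (f t q p * pdP i (f t) q p))
          * (-β * M⁻¹.mulVec p i * gibbs M V β Z q p)) := by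
    intro i
    exact ((((((hφP i).mul (hφP i)).div_const 2).const_mul
      (-(fderiv ℝ V q (Pi.single i 1)))).add
      (((hφP i).mul (hψ i)).const_mul (γ / β))).mul (hgP i)).fderiv_apply
  unfold LD.Dt LD.DQ LD.DP A0
  rw [Finset.sum_congr rfl (fun i _ => hQval i), Finset.sum_congr rfl (fun i _ => hPval i)]
  have e1 : ∀ i ∈ Finset.univ, M⁻¹.mulVec p i
        * ((pdQ i (f t) q p * f t q p + f t q p * pdQ i (f t) q p) / 2 * gibbs M V β Z q p
          + f t q p * f t q p / 2
            * (-β * fderiv ℝ V q (Pi.single i 1) * gibbs M V β Z q p))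
      = (f t q p * gibbs M V β Z q p) * (M⁻¹.mulVec p i * pdQ i (f t) q p)
        + (-(β * (f t q p * f t q p) * gibbs M V β Z q p / 2))
          * (M⁻¹.mulVec p i * fderiv ℝ V q (Pi.single i 1)) := by
    intro i _; ring
  have e2 : ∀ i ∈ Finset.univ, ((-(fderiv ℝ V q (Pi.single i 1))
            * ((pdP i (f t) q p * f t q p + f t q p * pdP i (f t) q p) / 2)
          + γ / β * (pdP i (f t) q p * pdP i (f t) q p
              + f t q p * pdP i (fun q' p' => pdP i (f t) q' p') q p)) * gibbs M V β Z q p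
        + (-(fderiv ℝ V q (Pi.single i 1)) * (f t q p * f t q p / 2)
            + γ / β * (f t q p * pdP i (f t) q p))
          * (-β * M⁻¹.mulVec p i * gibbs M V β Z q p))
      = (-(f t q p * gibbs M V β Z q p)) * (fderiv ℝ V q (Pi.single i 1) * pdP i (f t) q p)
        + (γ / β * gibbs M V β Z q p) * (pdP i (f t) q p * pdP i (f t) q p)
        + (γ / β * (f t q p * gibbs M V β Z q p))
          * (pdP i (fun q' p' => pdP i (f t) q' p') q p)
        + (β * (f t q p * f t q p) * gibbs M V β Z q p / 2)
          * (M⁻¹.mulVec p i * fderiv ℝ V q (Pi.single i 1))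
        + (-(γ * (f t q p * gibbs M V β Z q p))) * (M⁻¹.mulVec p i * pdP i (f t) q p) := by
    intro i _; field_simp; ring
  rw [Finset.sum_congr rfl e1, Finset.sum_congr rfl e2]
  have e3 : (∑ i, pdP i (f t) q p ^ 2) = ∑ i, pdP i (f t) q p * pdP i (f t) q p := by
    exact Finset.sum_congr rfl fun i _ => by ring
  rw [e3]
  simp only [Finset.sum_add_distrib, ← Finset.mul_sum]
  ring

end LDMain

section LDZero
open MeasureTheory Matrix

lemma LD.divergence_box_zero {n : ℕ} (a b : Fin (n+1) → ℝ) (hle : a ≤ b)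
    (W : Fin (n+1) → (Fin (n+1) → ℝ) → ℝ) (hW : ∀ i, ContDiff ℝ (⊤:ℕ∞) (W i))
    (hface : ∀ (i : Fin (n+1)) (x : Fin n → ℝ),
      W i (i.insertNth (b i) x) = W i (i.insertNth (a i) x)) :
    (∫ q in Set.Icc a b, ∑ i, fderiv ℝ (W i) q (Pi.single i 1)) = 0 := by
  have hcont : Continuous (fun q => ∑ i, fderiv ℝ (W i) q (Pi.single i 1)) :=
    continuous_finset_sum _ fun i _ => (LD.contDiff_fderiv_apply (hW i) _).continuous
  rw [MeasureTheory.integral_divergence_of_hasFDerivAt_off_countable' a b hle W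
    (fun i q => fderiv ℝ (W i) q) ∅ Set.countable_empty
    (fun i => (hW i).continuous.continuousOn)
    (fun x _ i => (((hW i).differentiable (by simp)) x).hasFDerivAt)
    (hcont.continuousOn.integrableOn_compact isCompact_Icc)]
  refine Finset.sum_eq_zero fun i _ => ?_
  rw [sub_eq_zero]
  exact integral_congr_ae (Filter.Eventually.of_forall fun x => hface i x)

lemma LD.insertNth_shift {n : ℕ} (i : Fin (n+1)) (L : ℝ) (x : Fin n → ℝ) :
    (i.insertNth L x : Fin (n+1) → ℝ)
      = fun j => (i.insertNth (0:ℝ) x : Fin (n+1) → ℝ) j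
          + L * (((Pi.single i 1 : Fin (n+1) → ℤ)) j : ℝ) := by
  funext j
  refine Fin.succAboveCases i ?_ ?_ j
  · simp
  · intro k
    simp [Pi.single_eq_of_ne (Fin.succAbove_ne i k)]

variable {d : ℕ} (M : Matrix (Fin d) (Fin d) ℝ) (V : (Fin d → ℝ) → ℝ) (γ β Z : ℝ)
  {f : ℝ → (Fin d → ℝ) → (Fin d → ℝ) → ℝ}

lemma LD.integral_Dt_zero (hf : ContDiff ℝ (⊤ : ℕ∞) (LD.unc f)) (T : ℝ) (hT : 0 ≤ T)
    (hfT : ∀ (t : ℝ) (q p : Fin d → ℝ), f (t + T) q p = f t q p) (q p : Fin d → ℝ) :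
    ∫ t in Set.Icc (0:ℝ) T, LD.Dt M V β Z f t q p = 0 := by
  have hdF : Differentiable ℝ (LD.unc f) := hf.differentiable (by simp)
  have hu : ∀ t' : ℝ, HasDerivAt (fun s => f s q p) (deriv (fun s => f s q p) t') t' := by
    intro t'
    have h : DifferentiableAt ℝ (fun s => f s q p) t' :=
      (LD.hasDerivAt_sliceT (hdF (t', q, p))).differentiableAt
    exact h.hasDerivAt
  have hA : ∀ t' : ℝ, HasDerivAt (fun s => f s q p * f s q p * gibbs M V β Z q p / 2)
      (LD.Dt M V β Z f t' q p) t' := by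
    intro t'
    have h := (((hu t').mul (hu t')).mul_const (gibbs M V β Z q p)).div_const 2
    refine h.congr_deriv ?_
    unfold LD.Dt; ring
  have hcont : Continuous (fun t' => LD.Dt M V β Z f t' q p) := by
    have heq : (fun t' => LD.Dt M V β Z f t' q p) = fun t' =>
        fderiv ℝ (LD.unc f) (t', q, p) (1, 0, 0) * f t' q p * gibbs M V β Z q p := by
      funext t'; unfold LD.Dt; rw [LD.derivT_eq hf]
    rw [heq]
    have h1 : Continuous (fun t' : ℝ => ((t', q, p) : ℝ × (Fin d → ℝ) × (Fin d → ℝ))) :=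
      continuous_id.prodMk continuous_const
    exact (((LD.contDiff_fderiv_apply hf _).continuous.comp h1).mul
      (hf.continuous.comp h1)).mul continuous_const
  rw [MeasureTheory.integral_Icc_eq_integral_Ioc, ← intervalIntegral.integral_of_le hT,
    intervalIntegral.integral_eq_sub_of_hasDerivAt (fun t' _ => hA t')
      (hcont.intervalIntegrable 0 T)]
  have hfT0 : f T q p = f 0 q p := by have h := hfT 0 q p; rwa [zero_add] at h
  rw [hfT0]; ring

end LDZero

section LDZero2
open MeasureTheory Matrix

variable {n : ℕ} (M : Matrix (Fin (n+1)) (Fin (n+1)) ℝ) (V : (Fin (n+1) → ℝ) → ℝ) (γ β Z : ℝ)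
  {f : ℝ → (Fin (n+1) → ℝ) → (Fin (n+1) → ℝ) → ℝ}

lemma LD.integral_DQ_zero (hf : ContDiff ℝ (⊤ : ℕ∞) (LD.unc f))
    (hV : ContDiff ℝ (⊤ : ℕ∞) V) (L : ℝ) (hL : 0 ≤ L)
    (hVper : ∀ (q : Fin (n+1) → ℝ) (m : Fin (n+1) → ℤ),
      V (fun j => q j + L * (m j : ℝ)) = V q)
    (hfq : ∀ (t : ℝ) (q p : Fin (n+1) → ℝ) (m : Fin (n+1) → ℤ),
      f t (fun j => q j + L * (m j : ℝ)) p = f t q p)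
    (t : ℝ) (p : Fin (n+1) → ℝ) :
    ∫ q in Set.Icc (0 : Fin (n+1) → ℝ) (fun _ => L), LD.DQ M V β Z f t q p = 0 := by
  have hle : (0 : Fin (n+1) → ℝ) ≤ fun _ => L := fun i => hL
  have happ := LD.divergence_box_zero (0 : Fin (n+1) → ℝ) (fun _ => L) hle
    (fun i => LD.Wq M V β Z f t p i) (fun i => LD.contDiff_Wq M β Z hf hV t p i) ?_
  · exact happ
  · intro i x
    show LD.Wq M V β Z f t p i ((i.insertNth L x : Fin (n+1) → ℝ))
      = LD.Wq M V β Z f t p i ((i.insertNth (0:ℝ) x : Fin (n+1) → ℝ))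
    rw [LD.insertNth_shift i L x]
    unfold LD.Wq
    rw [hfq t _ p (Pi.single i 1),
      LD.gibbs_periodic M V β Z L hVper (i.insertNth (0:ℝ) x) p (Pi.single i 1)]

lemma LD.pdP_zero {K : Set (Fin (n+1) → ℝ)} (hK : IsClosed K)
    (hKz : ∀ (t : ℝ) (q p : Fin (n+1) → ℝ), p ∉ K → f t q p = 0) (i : Fin (n+1)) (t : ℝ)
    (q : Fin (n+1) → ℝ) {p : Fin (n+1) → ℝ} (hp : p ∉ K) : pdP i (f t) q p = 0 := by
  have hev : (fun p' => f t q p') =ᶠ[nhds p] (fun _ => (0:ℝ)) := by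
    filter_upwards [hK.isOpen_compl.mem_nhds hp] with y hy using hKz t q y hy
  show fderiv ℝ (fun p' => f t q p') p (Pi.single i 1) = 0
  rw [Filter.EventuallyEq.fderiv_eq hev]
  simp

lemma LD.integral_DP_zero (hf : ContDiff ℝ (⊤ : ℕ∞) (LD.unc f))
    (hV : ContDiff ℝ (⊤ : ℕ∞) V) {K : Set (Fin (n+1) → ℝ)}
    (hK : IsCompact K) (hKz : ∀ (t : ℝ) (q p : Fin (n+1) → ℝ), p ∉ K → f t q p = 0)
    (t : ℝ) (q : Fin (n+1) → ℝ) :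
    ∫ p, LD.DP M V γ β Z f t q p = 0 := by
  obtain ⟨r, hr⟩ := hK.isBounded.subset_closedBall 0
  set R : ℝ := max r 0 + 1 with hR
  have hR0 : 0 < R := by positivity
  have hKR : ∀ p ∈ K, ‖p‖ < R := by
    intro p hp
    have h1 := hr hp
    rw [Metric.mem_closedBall, dist_zero_right] at h1
    calc ‖p‖ ≤ r := h1
    _ ≤ max r 0 := le_max_left _ _
    _ < R := by rw [hR]; linarith
  have hface0 : ∀ c : ℝ, |c| = R → ∀ (i : Fin (n+1)) (x : Fin n → ℝ),
      (i.insertNth c x : Fin (n+1) → ℝ) ∉ K := by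
    intro c hc i x hmem
    have h1 : |(i.insertNth c x : Fin (n+1) → ℝ) i| ≤ ‖(i.insertNth c x : Fin (n+1) → ℝ)‖ := by
      simpa using norm_le_pi_norm (i.insertNth c x : Fin (n+1) → ℝ) i
    rw [Fin.insertNth_apply_same, hc] at h1
    have h2 := hKR _ hmem
    linarith
  have hWz : ∀ (i : Fin (n+1)) (p' : Fin (n+1) → ℝ), p' ∉ K →
      LD.Wp M V γ β Z f t q i p' = 0 := by
    intro i p' hp'
    unfold LD.Wp
    rw [hKz t q p' hp']
    ring
  have hDPz : ∀ p, p ∉ K → LD.DP M V γ β Z f t q p = 0 := by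
    intro p hp
    unfold LD.DP
    refine Finset.sum_eq_zero fun i _ => ?_
    have hev : LD.Wp M V γ β Z f t q i =ᶠ[nhds p] (fun _ => (0:ℝ)) := by
      filter_upwards [hK.isClosed.isOpen_compl.mem_nhds hp] with y hy using hWz i y hy
    rw [Filter.EventuallyEq.fderiv_eq hev]
    simp
  have hKsub : K ⊆ Set.Icc (fun _ => -R) (fun _ => R) := by
    intro p hp
    have h2 := hKR p hp
    refine ⟨fun i => ?_, fun i => ?_⟩ <;>
      have h3 : |p i| ≤ ‖p‖ := by simpa using norm_le_pi_norm p i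
    · have h4 := (abs_lt.mp (lt_of_le_of_lt h3 h2)).1
      show -R ≤ p i
      linarith
    · have h4 := (abs_lt.mp (lt_of_le_of_lt h3 h2)).2
      show p i ≤ R
      linarith
  rw [← MeasureTheory.setIntegral_eq_integral_of_forall_compl_eq_zero
    (s := Set.Icc (fun _ => -R) (fun _ => R))
    (fun p hp => hDPz p (fun hpK => hp (hKsub hpK)))]
  have hle : (fun _ => -R : Fin (n+1) → ℝ) ≤ fun _ => R := fun i => by
    simp only []; linarith
  have happ := LD.divergence_box_zero (fun _ => -R) (fun _ => R) hle
    (fun i => LD.Wp M V γ β Z f t q i) (fun i => LD.contDiff_Wp M γ β Z hf hV t q i) ?_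
  · exact happ
  · intro i x
    show LD.Wp M V γ β Z f t q i ((i.insertNth R x : Fin (n+1) → ℝ))
      = LD.Wp M V γ β Z f t q i ((i.insertNth (-R) x : Fin (n+1) → ℝ))
    rw [hWz i _ (hface0 R (abs_of_pos hR0) i x),
      hWz i _ (hface0 (-R) (by rw [abs_neg, abs_of_pos hR0]) i x)]
end LDZero2

section LDCont
open MeasureTheory Matrix

variable {d : ℕ} (M : Matrix (Fin d) (Fin d) ℝ) (V : (Fin d → ℝ) → ℝ) (γ β Z : ℝ)
  (f : ℝ → (Fin d → ℝ) → (Fin d → ℝ) → ℝ)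

def LD.gibbsP : (Fin d → ℝ) × (Fin d → ℝ) → ℝ := fun y => gibbs M V β Z y.1 y.2

def LD.Hq : ℝ × (Fin d → ℝ) × (Fin d → ℝ) → ℝ :=
  fun x => LD.unc f x * LD.unc f x / 2 * LD.gibbsP M V β Z x.2

def LD.Hp (i : Fin d) : ℝ × (Fin d → ℝ) × (Fin d → ℝ) → ℝ :=
  fun x => (-(fderiv ℝ V x.2.1 (Pi.single i 1)) * (LD.unc f x * LD.unc f x / 2)
    + γ / β * (LD.unc f x * LD.F1 f i x)) * LD.gibbsP M V β Z x.2

variable {V f}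

lemma LD.contDiff_gibbsP (hV : ContDiff ℝ (⊤:ℕ∞) V) :
    ContDiff ℝ (⊤:ℕ∞) (LD.gibbsP M V β Z) := LD.contDiff_gibbs M V β Z hV

lemma LD.contDiff_Hq (hf : ContDiff ℝ (⊤ : ℕ∞) (LD.unc f)) (hV : ContDiff ℝ (⊤ : ℕ∞) V) :
    ContDiff ℝ (⊤:ℕ∞) (LD.Hq M V β Z f) :=
  ((hf.mul hf).div_const 2).mul ((LD.contDiff_gibbsP M β Z hV).comp contDiff_snd)

lemma LD.contDiff_Hp (hf : ContDiff ℝ (⊤ : ℕ∞) (LD.unc f)) (hV : ContDiff ℝ (⊤ : ℕ∞) V)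
    (i : Fin d) : ContDiff ℝ (⊤:ℕ∞) (LD.Hp M V γ β Z f i) := by
  have hdV : ContDiff ℝ (⊤:ℕ∞)
      (fun x : ℝ × (Fin d → ℝ) × (Fin d → ℝ) => fderiv ℝ V x.2.1 (Pi.single i 1)) :=
    (LD.contDiff_fderiv_apply hV _).comp (contDiff_fst.comp contDiff_snd)
  exact ((hdV.neg.mul ((hf.mul hf).div_const 2)).add
    (contDiff_const.mul (hf.mul (LD.contDiff_F1 hf i)))).mul
    ((LD.contDiff_gibbsP M β Z hV).comp contDiff_snd)

lemma LD.continuous_uncDt (hf : ContDiff ℝ (⊤ : ℕ∞) (LD.unc f))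
    (hV : ContDiff ℝ (⊤ : ℕ∞) V) :
    Continuous (fun x : ℝ × (Fin d → ℝ) × (Fin d → ℝ) =>
      LD.Dt M V β Z f x.1 x.2.1 x.2.2) := by
  have heq : (fun x : ℝ × (Fin d → ℝ) × (Fin d → ℝ) => LD.Dt M V β Z f x.1 x.2.1 x.2.2)
      = fun x => fderiv ℝ (LD.unc f) x (1, 0, 0) * LD.unc f x * LD.gibbsP M V β Z x.2 := by
    funext x
    show LD.Dt M V β Z f x.1 x.2.1 x.2.2 = _
    unfold LD.Dt
    rw [LD.derivT_eq hf]
    rfl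
  rw [heq]
  exact (((LD.contDiff_fderiv_apply hf _).continuous).mul hf.continuous).mul
    (((LD.contDiff_gibbsP M β Z hV).continuous).comp continuous_snd)

lemma LD.continuous_uncDQ (hf : ContDiff ℝ (⊤ : ℕ∞) (LD.unc f))
    (hV : ContDiff ℝ (⊤ : ℕ∞) V) :
    Continuous (fun x : ℝ × (Fin d → ℝ) × (Fin d → ℝ) =>
      LD.DQ M V β Z f x.1 x.2.1 x.2.2) := by
  have hHq := LD.contDiff_Hq M β Z hf hV
  have hdHq : Differentiable ℝ (LD.Hq M V β Z f) := hHq.differentiable (by simp)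
  have heq : (fun x : ℝ × (Fin d → ℝ) × (Fin d → ℝ) => LD.DQ M V β Z f x.1 x.2.1 x.2.2)
      = fun x => ∑ i, M⁻¹.mulVec x.2.2 i
          * fderiv ℝ (LD.Hq M V β Z f) x (0, Pi.single i 1, 0) := by
    funext x
    show LD.DQ M V β Z f x.1 x.2.1 x.2.2 = _
    unfold LD.DQ
    refine Finset.sum_congr rfl fun i _ => ?_
    exact ((LD.hasDirDeriv_sliceQ (hdHq (x.1, x.2.1, x.2.2)) (Pi.single i 1)).const_mul
      (M⁻¹.mulVec x.2.2 i)).fderiv_apply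
  rw [heq]
  exact continuous_finset_sum _ fun i _ =>
    ((LD.continuous_mulVec M⁻¹ i).comp (continuous_snd.comp continuous_snd)).mul
      (LD.contDiff_fderiv_apply hHq _).continuous

lemma LD.continuous_uncDP (hf : ContDiff ℝ (⊤ : ℕ∞) (LD.unc f))
    (hV : ContDiff ℝ (⊤ : ℕ∞) V) :
    Continuous (fun x : ℝ × (Fin d → ℝ) × (Fin d → ℝ) =>
      LD.DP M V γ β Z f x.1 x.2.1 x.2.2) := by
  have hHp := fun i => LD.contDiff_Hp M γ β Z hf hV i
  have heq : (fun x : ℝ × (Fin d → ℝ) × (Fin d → ℝ) => LD.DP M V γ β Z f x.1 x.2.1 x.2.2)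
      = fun x => ∑ i, fderiv ℝ (LD.Hp M V γ β Z f i) x (0, 0, Pi.single i 1) := by
    funext x
    show LD.DP M V γ β Z f x.1 x.2.1 x.2.2 = _
    unfold LD.DP
    refine Finset.sum_congr rfl fun i _ => ?_
    have hWpeq : LD.Wp M V γ β Z f x.1 x.2.1 i
        = fun p' => LD.Hp M V γ β Z f i (x.1, x.2.1, p') := by
      funext p'
      unfold LD.Wp LD.Hp
      rw [LD.pdP_eq hf]
      rfl
    rw [hWpeq]
    exact (LD.hasDirDeriv_sliceP
      ((hHp i).differentiable (by simp) (x.1, x.2.1, x.2.2))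
      (Pi.single i 1)).fderiv_apply
  rw [heq]
  exact continuous_finset_sum _ fun i _ => (LD.contDiff_fderiv_apply (hHp i) _).continuous

lemma LD.unc_Phi_eq (hf : ContDiff ℝ (⊤ : ℕ∞) (LD.unc f)) :
    (fun x : ℝ × (Fin d → ℝ) × (Fin d → ℝ) =>
        (deriv (fun t' => f t' x.2.1 x.2.2) x.1 + A0 M V γ β (f x.1) x.2.1 x.2.2)
          * f x.1 x.2.1 x.2.2 * gibbs M V β Z x.2.1 x.2.2)
      = fun x => (fderiv ℝ (LD.unc f) x (1, 0, 0)
          + ((∑ i, M⁻¹.mulVec x.2.2 i * fderiv ℝ (LD.unc f) x (0, Pi.single i 1, 0))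
            - (∑ i, fderiv ℝ V x.2.1 (Pi.single i 1) * LD.F1 f i x)
            + γ * (-(∑ i, M⁻¹.mulVec x.2.2 i * LD.F1 f i x)
              + β⁻¹ * ∑ i, fderiv ℝ (LD.F1 f i) x (0, 0, Pi.single i 1))))
          * LD.unc f x * LD.gibbsP M V β Z x.2 := by
  funext x
  unfold A0
  simp only [LD.pdP2_eq hf]
  simp only [LD.derivT_eq hf, LD.pdQ_eq hf, LD.pdP_eq hf]
  rfl

lemma LD.unc_Psi_eq (hf : ContDiff ℝ (⊤ : ℕ∞) (LD.unc f)) :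
    (fun x : ℝ × (Fin d → ℝ) × (Fin d → ℝ) =>
        (∑ i, pdP i (f x.1) x.2.1 x.2.2 ^ 2) * gibbs M V β Z x.2.1 x.2.2)
      = fun x => (∑ i, LD.F1 f i x ^ 2) * LD.gibbsP M V β Z x.2 := by
  funext x
  simp only [LD.pdP_eq hf]
  rfl

lemma LD.continuous_uncPhi (hf : ContDiff ℝ (⊤ : ℕ∞) (LD.unc f))
    (hV : ContDiff ℝ (⊤ : ℕ∞) V) :
    Continuous (fun x : ℝ × (Fin d → ℝ) × (Fin d → ℝ) =>
      (deriv (fun t' => f t' x.2.1 x.2.2) x.1 + A0 M V γ β (f x.1) x.2.1 x.2.2)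
        * f x.1 x.2.1 x.2.2 * gibbs M V β Z x.2.1 x.2.2) := by
  rw [LD.unc_Phi_eq M γ β Z hf]
  have hg : Continuous (fun x : ℝ × (Fin d → ℝ) × (Fin d → ℝ) => LD.gibbsP M V β Z x.2) :=
    ((LD.contDiff_gibbsP M β Z hV).continuous).comp continuous_snd
  have hmv : ∀ i : Fin d, Continuous
      (fun x : ℝ × (Fin d → ℝ) × (Fin d → ℝ) => M⁻¹.mulVec x.2.2 i) := fun i =>
    (LD.continuous_mulVec M⁻¹ i).comp (continuous_snd.comp continuous_snd)
  have hdV : ∀ i : Fin d, Continuous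
      (fun x : ℝ × (Fin d → ℝ) × (Fin d → ℝ) => fderiv ℝ V x.2.1 (Pi.single i 1)) := fun i =>
    ((LD.contDiff_fderiv_apply hV _).continuous).comp (continuous_fst.comp continuous_snd)
  refine Continuous.mul (Continuous.mul ?_ hf.continuous) hg
  refine ((LD.contDiff_fderiv_apply hf _).continuous).add ?_
  refine Continuous.add (Continuous.sub ?_ ?_) (continuous_const.mul (Continuous.add ?_ ?_))
  · exact continuous_finset_sum _ fun i _ =>
      (hmv i).mul (LD.contDiff_fderiv_apply hf _).continuous
  · exact continuous_finset_sum _ fun i _ => (hdV i).mul (LD.contDiff_F1 hf i).continuous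
  · exact (continuous_finset_sum _ fun i _ =>
      (hmv i).mul (LD.contDiff_F1 hf i).continuous).neg
  · exact continuous_const.mul (continuous_finset_sum _ fun i _ =>
      (LD.contDiff_fderiv_apply (LD.contDiff_F1 hf i) _).continuous)

lemma LD.continuous_uncPsi (hf : ContDiff ℝ (⊤ : ℕ∞) (LD.unc f))
    (hV : ContDiff ℝ (⊤ : ℕ∞) V) :
    Continuous (fun x : ℝ × (Fin d → ℝ) × (Fin d → ℝ) =>
      (∑ i, pdP i (f x.1) x.2.1 x.2.2 ^ 2) * gibbs M V β Z x.2.1 x.2.2) := by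
  rw [LD.unc_Psi_eq M β Z hf]
  exact (continuous_finset_sum _ fun i _ => ((LD.contDiff_F1 hf i).continuous).pow 2).mul
    (((LD.contDiff_gibbsP M β Z hV).continuous).comp continuous_snd)

end LDCont

open MeasureTheory Matrix in
/-- for every smooth `f`, `T`-periodic in time, `L·ℤ^d`-periodic in `q` and
compactly supported in `p`,
`∫ (∂_t f + A₀f) f dμ = −(γ/β) ∫ |∇_p f|² dμ`. -/
theorem dirichlet_form_identity
    {d : ℕ} (hd : 1 ≤ d) (L T γ β Z : ℝ) (hL : 0 < L) (hT : 0 < T) (hγ : 0 < γ)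
    (hβ : 0 < β) (hZ : 0 < Z)
    (M : Matrix (Fin d) (Fin d) ℝ) (hM : M.PosDef)
    (V : (Fin d → ℝ) → ℝ) (hV : ContDiff ℝ (⊤ : ℕ∞) V)
    (hVper : ∀ (q : Fin d → ℝ) (m : Fin d → ℤ), V (fun j => q j + L * (m j : ℝ)) = V q)
    (hZnorm : ∫ q in Set.Icc (0 : Fin d → ℝ) (fun _ => L),
      ∫ p : Fin d → ℝ, gibbs M V β Z q p = 1)
    (f : ℝ → (Fin d → ℝ) → (Fin d → ℝ) → ℝ)
    (hf : ContDiff ℝ (⊤ : ℕ∞) (fun x : ℝ × (Fin d → ℝ) × (Fin d → ℝ) => f x.1 x.2.1 x.2.2))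
    (hfT : ∀ (t : ℝ) (q p : Fin d → ℝ), f (t + T) q p = f t q p)
    (hfq : ∀ (t : ℝ) (q p : Fin d → ℝ) (m : Fin d → ℤ),
      f t (fun j => q j + L * (m j : ℝ)) p = f t q p)
    (hfp : ∃ K : Set (Fin d → ℝ), IsCompact K ∧
      ∀ (t : ℝ) (q p : Fin d → ℝ), p ∉ K → f t q p = 0) :
    (∫ t in Set.Icc (0:ℝ) T, ∫ q in Set.Icc (0 : Fin d → ℝ) (fun _ => L), ∫ p : Fin d → ℝ,
        (deriv (fun t' => f t' q p) t + A0 M V γ β (f t) q p) * f t q p * gibbs M V β Z q p)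
      = -(γ / β) * ∫ t in Set.Icc (0:ℝ) T, ∫ q in Set.Icc (0 : Fin d → ℝ) (fun _ => L),
          ∫ p : Fin d → ℝ, (∑ i, (pdP i (f t) q p) ^ 2) * gibbs M V β Z q p := by
  classical
  obtain ⟨K, hK, hKz⟩ := hfp
  obtain ⟨n, rfl⟩ : ∃ n, d = n + 1 := ⟨d - 1, (Nat.succ_pred_eq_of_pos hd).symm⟩
  have hf' : ContDiff ℝ (⊤ : ℕ∞) (LD.unc f) := hf
  have hMt : Mᵀ = M := by
    have h := hM.1.eq
    ext i j
    have h2 := congrFun (congrFun h i) j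
    simpa using h2
  have hsym : M⁻¹ᵀ = M⁻¹ := by rw [Matrix.transpose_nonsing_inv, hMt]
  have hβ0 : β ≠ 0 := ne_of_gt hβ
  set ρ : Measure (ℝ × (Fin (n+1) → ℝ) × (Fin (n+1) → ℝ)) :=
    ((volume : Measure ℝ).restrict (Set.Icc (0:ℝ) T)).prod
      ((((volume : Measure (Fin (n+1) → ℝ)).restrict
        (Set.Icc (0 : Fin (n+1) → ℝ) (fun _ => L)))).prod
        (volume : Measure (Fin (n+1) → ℝ))) with hρ
  have master : ∀ h : ℝ → (Fin (n+1) → ℝ) → (Fin (n+1) → ℝ) → ℝ,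
      Continuous (fun x : ℝ × (Fin (n+1) → ℝ) × (Fin (n+1) → ℝ) => h x.1 x.2.1 x.2.2) →
      (∀ t q p, p ∉ K → h t q p = 0) →
      (Integrable (fun x : ℝ × (Fin (n+1) → ℝ) × (Fin (n+1) → ℝ) => h x.1 x.2.1 x.2.2) ρ)
        ∧ (∀ t : ℝ, Integrable (fun y : (Fin (n+1) → ℝ) × (Fin (n+1) → ℝ) => h t y.1 y.2)
            ((((volume : Measure (Fin (n+1) → ℝ)).restrict
              (Set.Icc (0 : Fin (n+1) → ℝ) (fun _ => L)))).prod
              (volume : Measure (Fin (n+1) → ℝ))))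
        ∧ ((∫ t in Set.Icc (0:ℝ) T, ∫ q in Set.Icc (0 : Fin (n+1) → ℝ) (fun _ => L),
            ∫ p : Fin (n+1) → ℝ, h t q p)
          = ∫ x, h x.1 x.2.1 x.2.2 ∂ρ) := by
    intro h hc hz
    have hQP : ∀ t : ℝ, Integrable (fun y : (Fin (n+1) → ℝ) × (Fin (n+1) → ℝ) => h t y.1 y.2)
        ((((volume : Measure (Fin (n+1) → ℝ)).restrict
          (Set.Icc (0 : Fin (n+1) → ℝ) (fun _ => L)))).prod
          (volume : Measure (Fin (n+1) → ℝ))) := by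
      intro t
      have hre : (((volume : Measure (Fin (n+1) → ℝ)).restrict
            (Set.Icc (0 : Fin (n+1) → ℝ) (fun _ => L)))).prod
            (volume : Measure (Fin (n+1) → ℝ))
          = ((volume : Measure (Fin (n+1) → ℝ)).prod (volume : Measure (Fin (n+1) → ℝ))).restrict
            ((Set.Icc (0 : Fin (n+1) → ℝ) (fun _ => L)) ×ˢ (Set.univ : Set (Fin (n+1) → ℝ))) := by
        rw [← Measure.prod_restrict, Measure.restrict_univ]
      rw [hre]
      refine LD.integrableOn_of_compact_of_eqzero
        (C := (Set.Icc (0 : Fin (n+1) → ℝ) (fun _ => L)) ×ˢ K)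
        (hc.comp (continuous_const.prodMk continuous_id))
        (measurableSet_Icc.prod MeasurableSet.univ)
        (isCompact_Icc.prod hK) ?_
      rintro y ⟨hyS, hyC⟩
      exact hz t y.1 y.2 (fun hk => hyC ⟨hyS.1, hk⟩)
    have hTQP : Integrable (fun x : ℝ × (Fin (n+1) → ℝ) × (Fin (n+1) → ℝ) =>
        h x.1 x.2.1 x.2.2) ρ := by
      have hre : ρ = (((volume : Measure ℝ).prod
            (((volume : Measure (Fin (n+1) → ℝ))).prod
              (volume : Measure (Fin (n+1) → ℝ)))).restrict
          ((Set.Icc (0:ℝ) T) ×ˢ ((Set.Icc (0 : Fin (n+1) → ℝ) (fun _ => L))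
            ×ˢ (Set.univ : Set (Fin (n+1) → ℝ))))) := by
        rw [hρ, ← Measure.prod_restrict, ← Measure.prod_restrict, Measure.restrict_univ]
      rw [hre]
      refine LD.integrableOn_of_compact_of_eqzero
        (C := (Set.Icc (0:ℝ) T) ×ˢ ((Set.Icc (0 : Fin (n+1) → ℝ) (fun _ => L)) ×ˢ K)) hc
        (measurableSet_Icc.prod (measurableSet_Icc.prod MeasurableSet.univ))
        (isCompact_Icc.prod (isCompact_Icc.prod hK)) ?_
      rintro y ⟨hyS, hyC⟩
      exact hz y.1 y.2.1 y.2.2 (fun hk => hyC ⟨hyS.1, hyS.2.1, hk⟩)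
    refine ⟨hTQP, hQP, ?_⟩
    calc (∫ t in Set.Icc (0:ℝ) T, ∫ q in Set.Icc (0 : Fin (n+1) → ℝ) (fun _ => L),
            ∫ p : Fin (n+1) → ℝ, h t q p)
        = ∫ t in Set.Icc (0:ℝ) T, ∫ y, h t y.1 y.2
            ∂((((volume : Measure (Fin (n+1) → ℝ)).restrict
              (Set.Icc (0 : Fin (n+1) → ℝ) (fun _ => L)))).prod
              (volume : Measure (Fin (n+1) → ℝ))) :=
          integral_congr_ae (Filter.Eventually.of_forall fun t =>
            MeasureTheory.integral_integral (hQP t))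
      _ = ∫ x, h x.1 x.2.1 x.2.2 ∂ρ := MeasureTheory.integral_integral hTQP
  -- vanishing off K
  have hΦz : ∀ (t : ℝ) (q p : Fin (n+1) → ℝ), p ∉ K →
      (deriv (fun t' => f t' q p) t + A0 M V γ β (f t) q p) * f t q p
        * gibbs M V β Z q p = 0 := by
    intro t q p hp
    rw [hKz t q p hp]
    ring
  have hΨz : ∀ (t : ℝ) (q p : Fin (n+1) → ℝ), p ∉ K →
      (∑ i, (pdP i (f t) q p) ^ 2) * gibbs M V β Z q p = 0 := by
    intro t q p hp
    have h0 : ∀ i : Fin (n+1), pdP i (f t) q p = 0 :=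
      fun i => LD.pdP_zero hK.isClosed hKz i t q hp
    simp [h0]
  have hDtz : ∀ (t : ℝ) (q p : Fin (n+1) → ℝ), p ∉ K → LD.Dt M V β Z f t q p = 0 := by
    intro t q p hp
    unfold LD.Dt
    rw [hKz t q p hp]
    ring
  have hDQz : ∀ (t : ℝ) (q p : Fin (n+1) → ℝ), p ∉ K → LD.DQ M V β Z f t q p = 0 := by
    intro t q p hp
    unfold LD.DQ
    refine Finset.sum_eq_zero fun i _ => ?_
    have hWq0 : LD.Wq M V β Z f t p i = fun _ => (0:ℝ) := by
      funext q'
      unfold LD.Wq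
      rw [hKz t q' p hp]
      ring
    rw [hWq0]
    simp
  have hDPz : ∀ (t : ℝ) (q p : Fin (n+1) → ℝ), p ∉ K → LD.DP M V γ β Z f t q p = 0 := by
    intro t q p hp
    unfold LD.DP
    refine Finset.sum_eq_zero fun i _ => ?_
    have hev : LD.Wp M V γ β Z f t q i =ᶠ[nhds p] (fun _ => (0:ℝ)) := by
      filter_upwards [hK.isClosed.isOpen_compl.mem_nhds hp] with y hy
      unfold LD.Wp
      rw [hKz t q y hy]
      ring
    rw [Filter.EventuallyEq.fderiv_eq hev]
    simp
  obtain ⟨hΦint, hΦt, hΦrep⟩ := master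
    (fun t q p => (deriv (fun t' => f t' q p) t + A0 M V γ β (f t) q p) * f t q p
      * gibbs M V β Z q p)
    (LD.continuous_uncPhi M γ β Z hf' hV) hΦz
  obtain ⟨hΨint, hΨt, hΨrep⟩ := master
    (fun t q p => (∑ i, (pdP i (f t) q p) ^ 2) * gibbs M V β Z q p)
    (LD.continuous_uncPsi M β Z hf' hV) hΨz
  obtain ⟨hDtint, hDtt, hDtrep⟩ := master (LD.Dt M V β Z f)
    (LD.continuous_uncDt M β Z hf' hV) hDtz
  obtain ⟨hDQint, hDQt, hDQrep⟩ := master (LD.DQ M V β Z f)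
    (LD.continuous_uncDQ M β Z hf' hV) hDQz
  obtain ⟨hDPint, hDPt, hDPrep⟩ := master (LD.DP M V γ β Z f)
    (LD.continuous_uncDP M γ β Z hf' hV) hDPz
  have hpw : (fun x : ℝ × (Fin (n+1) → ℝ) × (Fin (n+1) → ℝ) =>
        (deriv (fun t' => f t' x.2.1 x.2.2) x.1 + A0 M V γ β (f x.1) x.2.1 x.2.2)
          * f x.1 x.2.1 x.2.2 * gibbs M V β Z x.2.1 x.2.2)
      = fun x => LD.Dt M V β Z f x.1 x.2.1 x.2.2 + LD.DQ M V β Z f x.1 x.2.1 x.2.2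
          + LD.DP M V γ β Z f x.1 x.2.1 x.2.2
          - γ / β * ((∑ i, pdP i (f x.1) x.2.1 x.2.2 ^ 2) * gibbs M V β Z x.2.1 x.2.2) := by
    funext x
    exact LD.pointwise M γ β Z hf' hV hsym hβ0 x.1 x.2.1 x.2.2
  have hDt0 : (∫ x, LD.Dt M V β Z f x.1 x.2.1 x.2.2 ∂ρ) = 0 := by
    rw [hρ, MeasureTheory.integral_prod_symm _ hDtint]
    refine Eq.trans (integral_congr_ae (Filter.Eventually.of_forall fun y => ?_))
      (integral_zero _ _)
    exact LD.integral_Dt_zero M V β Z hf' T hT.le hfT y.1 y.2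
  have hDQ0 : (∫ x, LD.DQ M V β Z f x.1 x.2.1 x.2.2 ∂ρ) = 0 := by
    rw [hρ, MeasureTheory.integral_prod _ hDQint]
    refine Eq.trans (integral_congr_ae (Filter.Eventually.of_forall fun t => ?_))
      (integral_zero _ _)
    show (∫ y, LD.DQ M V β Z f t y.1 y.2
      ∂(((volume : Measure (Fin (n+1) → ℝ)).restrict
        (Set.Icc (0 : Fin (n+1) → ℝ) (fun _ => L))).prod
        (volume : Measure (Fin (n+1) → ℝ)))) = 0
    rw [MeasureTheory.integral_prod_symm _ (hDQt t)]
    refine Eq.trans (integral_congr_ae (Filter.Eventually.of_forall fun p => ?_))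
      (integral_zero _ _)
    exact LD.integral_DQ_zero M V β Z hf' hV L hL.le hVper hfq t p
  have hDP0 : (∫ x, LD.DP M V γ β Z f x.1 x.2.1 x.2.2 ∂ρ) = 0 := by
    rw [hρ, MeasureTheory.integral_prod _ hDPint]
    refine Eq.trans (integral_congr_ae (Filter.Eventually.of_forall fun t => ?_))
      (integral_zero _ _)
    show (∫ y, LD.DP M V γ β Z f t y.1 y.2
      ∂(((volume : Measure (Fin (n+1) → ℝ)).restrict
        (Set.Icc (0 : Fin (n+1) → ℝ) (fun _ => L))).prod
        (volume : Measure (Fin (n+1) → ℝ)))) = 0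
    rw [MeasureTheory.integral_prod _ (hDPt t)]
    refine Eq.trans (integral_congr_ae (Filter.Eventually.of_forall fun q => ?_))
      (integral_zero _ _)
    exact LD.integral_DP_zero M V γ β Z hf' hV hK hKz t q
  have hI1 : Integrable (fun x : ℝ × (Fin (n+1) → ℝ) × (Fin (n+1) → ℝ) =>
      LD.Dt M V β Z f x.1 x.2.1 x.2.2 + LD.DQ M V β Z f x.1 x.2.1 x.2.2) ρ :=
    hDtint.add hDQint
  have hI2 : Integrable (fun x : ℝ × (Fin (n+1) → ℝ) × (Fin (n+1) → ℝ) =>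
      LD.Dt M V β Z f x.1 x.2.1 x.2.2 + LD.DQ M V β Z f x.1 x.2.1 x.2.2
        + LD.DP M V γ β Z f x.1 x.2.1 x.2.2) ρ := hI1.add hDPint
  have hI3 : Integrable (fun x : ℝ × (Fin (n+1) → ℝ) × (Fin (n+1) → ℝ) =>
      γ / β * ((∑ i, pdP i (f x.1) x.2.1 x.2.2 ^ 2) * gibbs M V β Z x.2.1 x.2.2)) ρ :=
    hΨint.const_mul _
  rw [hΦrep, hΨrep, hpw,
    MeasureTheory.integral_sub hI2 hI3,
    MeasureTheory.integral_add hI1 hDPint,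
    MeasureTheory.integral_add hDtint hDQint,
    MeasureTheory.integral_const_mul, hDt0, hDQ0, hDP0]
  ring
end
end
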